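/- Let $Y_1, \ldots, Y_{N+1}$ be random labels in a finite set and $w \colon \mathcal{Y} \to [0, \infty)$ a bounded weight function with $\mathbb{E}[w(Y_1)] > 0$, where $Y_1, \ldots, Y_N$ are i.i.d. (and $Y_{N+1}$ may have a different distribution), all independent. Define the normalized weights $p_k = w(Y_k) / \sum_{l=1}^{N+1} w(Y_l)$ (with $p_k = 0$ when the denominator is zero). Then $\mathbb{E}\big[\max_{k=1}^{N+1} p_k\big] \le \frac{2\|w\|_\infty}{N\, \mathbb{E}[w(Y_1)]} + \frac{4}{N (\mathbb{E} w(Y_1))^2}\Big(\mathrm{Var}(w(Y_1)) + \frac{\mathrm{Var}(w(Y_{N+1}))}{N}\Big)$. -/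

import Mathlib

open MeasureTheory ProbabilityTheory

/-- Expected maximum of normalized importance weights. -/
theorem stmt_10 (Ω : Type*) [MeasurableSpace Ω] (μ : Measure Ω) [IsProbabilityMeasure μ]
    (𝒴 : Type*) [Fintype 𝒴] [Nonempty 𝒴] [MeasurableSpace 𝒴] [MeasurableSingletonClass 𝒴]
    (N : ℕ) (hN : 0 < N)
    (Y : Fin (N + 1) → Ω → 𝒴) (hmeas : ∀ k, Measurable (Y k))
    (hid : ∀ k : Fin (N + 1), (k : ℕ) < N → Measure.map (Y k) μ = Measure.map (Y 0) μ)
    (hind : iIndepFun Y μ)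
    (w : 𝒴 → ℝ) (hw : ∀ y, 0 ≤ w y)
    (p : Fin (N + 1) → Ω → ℝ)
    (hp : ∀ k ω, p k ω = if (∑ l, w (Y l ω)) = 0 then 0
      else w (Y k ω) / ∑ l, w (Y l ω))
    (E0 EN Vr0 VrN wsup : ℝ)
    (hE0 : E0 = ∫ ω, w (Y 0 ω) ∂μ) (hE0pos : 0 < E0)
    (hVr0 : Vr0 = ∫ ω, (w (Y 0 ω) - E0) ^ 2 ∂μ)
    (hEN : EN = ∫ ω, w (Y (Fin.last N) ω) ∂μ)
    (hVrN : VrN = ∫ ω, (w (Y (Fin.last N) ω) - EN) ^ 2 ∂μ)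
    (hwsup : wsup = Finset.univ.sup' Finset.univ_nonempty w) :
    ∫ ω, Finset.univ.sup' Finset.univ_nonempty (fun k => p k ω) ∂μ
      ≤ 2 * wsup / (N * E0) + 4 / (N * E0 ^ 2) * (Vr0 + VrN / N) := by
  classical
  set X : Fin (N + 1) → Ω → ℝ := fun k => w ∘ Y k with hXdef
  have hwmeas : Measurable w := measurable_of_countable w
  have hXmeas : ∀ k, Measurable (X k) := fun k => hwmeas.comp (hmeas k)
  have hwsup_le : ∀ y, w y ≤ wsup := by
    intro y; rw [hwsup]; exact Finset.le_sup' w (Finset.mem_univ y)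
  have hwsup0 : 0 ≤ wsup := le_trans (hw (Classical.arbitrary 𝒴)) (hwsup_le _)
  have hXmem : ∀ k, MemLp (X k) 2 μ := fun k =>
    MemLp.of_bound (hXmeas k).aestronglyMeasurable wsup (ae_of_all _ fun ω => by
      simp only [hXdef, Function.comp_apply, Real.norm_eq_abs, abs_of_nonneg (hw _)]
      exact hwsup_le _)
  have hXint : ∀ k, Integrable (X k) μ := fun k => (hXmem k).integrable one_le_two
  -- expectations
  have hEeq : ∀ k : Fin (N + 1), (k : ℕ) < N → ∫ ω, X k ω ∂μ = E0 := by
    intro k hk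
    rw [hE0]
    calc ∫ ω, X k ω ∂μ = ∫ y, w y ∂(Measure.map (Y k) μ) :=
          (integral_map (hmeas k).aemeasurable hwmeas.aestronglyMeasurable).symm
      _ = ∫ y, w y ∂(Measure.map (Y 0) μ) := by rw [hid k hk]
      _ = ∫ ω, w (Y 0 ω) ∂μ := integral_map (hmeas 0).aemeasurable hwmeas.aestronglyMeasurable
  have hElast : ∫ ω, X (Fin.last N) ω ∂μ = EN := hEN.symm
  -- variances
  have hvar_int : ∀ k : Fin (N + 1), variance (X k) μ
      = ∫ ω, (X k ω - ∫ ω', X k ω' ∂μ) ^ 2 ∂μ := by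
    intro k
    rw [variance_eq_integral (hXmeas k).aemeasurable]
  have hvar_eq : ∀ k : Fin (N + 1), (k : ℕ) < N → variance (X k) μ = Vr0 := by
    intro k hk
    rw [hvar_int k, hEeq k hk, hVr0]
    have hg : Measurable fun y => (w y - E0) ^ 2 := measurable_of_countable _
    calc ∫ ω, (X k ω - E0) ^ 2 ∂μ
        = ∫ y, (w y - E0) ^ 2 ∂(Measure.map (Y k) μ) :=
          (integral_map (hmeas k).aemeasurable hg.aestronglyMeasurable).symm
      _ = ∫ y, (w y - E0) ^ 2 ∂(Measure.map (Y 0) μ) := by rw [hid k hk]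
      _ = ∫ ω, (w (Y 0 ω) - E0) ^ 2 ∂μ :=
          integral_map (hmeas 0).aemeasurable hg.aestronglyMeasurable
  have hvar_last : variance (X (Fin.last N)) μ = VrN := by
    rw [hvar_int _, hElast, hVrN]
    rfl
  -- the sum S
  set S : Ω → ℝ := ∑ i, X i with hSdef
  have hSapp : ∀ ω, S ω = ∑ l, w (Y l ω) := by
    intro ω
    simp [hSdef, hXdef, Finset.sum_apply]
  have hSmem : MemLp S 2 μ := memLp_finset_sum' _ (fun i _ => hXmem i)
  have hSmeas : Measurable S := by
    have : S = fun ω => ∑ i, X i ω := by ext ω; simp [hSdef, Finset.sum_apply]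
    rw [this]
    exact Finset.measurable_sum _ (fun i _ => hXmeas i)
  have hENnn : 0 ≤ EN := by
    rw [hEN]; exact integral_nonneg fun ω => hw _
  set m : ℝ := N * E0 + EN with hmdef
  have hNE0 : (0:ℝ) < N * E0 := by
    have : (0:ℝ) < (N:ℝ) := by exact_mod_cast hN
    positivity
  have hm : 0 < m := by linarith
  have hNE0m : N * E0 ≤ m := by simp [hmdef, hENnn]
  have hES : ∫ ω, S ω ∂μ = m := by
    have : ∫ ω, S ω ∂μ = ∑ i, ∫ ω, X i ω ∂μ := by
      simp only [hSdef, Finset.sum_apply]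
      exact integral_finset_sum _ (fun i _ => hXint i)
    rw [this, Fin.sum_univ_castSucc]
    have h1 : ∀ k : Fin N, ∫ ω, X (Fin.castSucc k) ω ∂μ = E0 := fun k =>
      hEeq _ (by simpa using k.isLt)
    simp only [h1, hElast, Finset.sum_const, Finset.card_univ, Fintype.card_fin, nsmul_eq_mul,
      hmdef]
  -- variance of S
  have hXind : iIndepFun X μ :=
    hind.comp (fun _ => w) (fun _ => hwmeas)
  have hVarS : variance S μ = N * Vr0 + VrN := by
    rw [hSdef, IndepFun.variance_sum (fun i _ => hXmem i)
      (fun i _ j _ hij => hXind.indepFun hij)]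
    rw [Fin.sum_univ_castSucc]
    have h1 : ∀ k : Fin N, variance (X (Fin.castSucc k)) μ = Vr0 := fun k =>
      hvar_eq _ (by simpa using k.isLt)
    simp [h1, hvar_last]
  have hVr0nn : 0 ≤ Vr0 := by rw [hVr0]; exact integral_nonneg fun ω => sq_nonneg _
  have hVrNnn : 0 ≤ VrN := by rw [hVrN]; exact integral_nonneg fun ω => sq_nonneg _
  -- Chebyshev
  set A : Set Ω := {ω | S ω ≤ m / 2} with hAdef
  have hAmeas : MeasurableSet A := hSmeas measurableSet_Iic
  have hcheb : (μ A).toReal ≤ (N * Vr0 + VrN) / (m / 2) ^ 2 := by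
    have hsub : A ⊆ {ω | m / 2 ≤ |S ω - ∫ ω', S ω' ∂μ|} := by
      intro ω hω
      simp only [hAdef, Set.mem_setOf_eq] at hω ⊢
      rw [hES, abs_sub_comm, abs_of_nonneg (by linarith)]
      linarith
    have h1 := meas_ge_le_variance_div_sq (μ := μ) hSmem (c := m / 2) (by positivity)
    have h2 : μ A ≤ ENNReal.ofReal ((N * Vr0 + VrN) / (m / 2) ^ 2) := by
      refine le_trans (measure_mono hsub) ?_
      rw [← hVarS]
      exact h1
    refine ENNReal.toReal_le_of_le_ofReal (by positivity) h2
  -- pointwise bound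
  set g : Ω → ℝ := fun ω => A.indicator (fun _ => (1:ℝ)) ω + 2 * wsup / m with hgdef
  have hgint : Integrable g μ :=
    ((integrable_const (1:ℝ)).indicator hAmeas).add (integrable_const _)
  have hfg : ∀ ω, Finset.univ.sup' Finset.univ_nonempty (fun k => p k ω) ≤ g ω := by
    intro ω
    apply Finset.sup'_le
    intro k _
    have hwk : w (Y k ω) ≤ S ω := by
      rw [hSapp]
      exact Finset.single_le_sum (f := fun l => w (Y l ω)) (fun l _ => hw _)
        (Finset.mem_univ k)
    have hSnn : 0 ≤ S ω := le_trans (hw _) hwk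
    by_cases hA : ω ∈ A
    · have h1 : p k ω ≤ 1 := by
        rw [hp, ← hSapp]
        split
        · norm_num
        · next h => exact div_le_one_of_le₀ hwk hSnn
      have : g ω = 1 + 2 * wsup / m := by simp [hgdef, Set.indicator_of_mem hA]
      rw [this]
      have : 0 ≤ 2 * wsup / m := by positivity
      linarith
    · have hS2 : m / 2 < S ω := by
        simp only [hAdef, Set.mem_setOf_eq, not_le] at hA
        exact hA
      have hSpos : 0 < S ω := lt_trans (by positivity) hS2
      have h1 : p k ω = w (Y k ω) / S ω := by
        rw [hp, ← hSapp]
        rw [if_neg (ne_of_gt hSpos)]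
      have h2 : w (Y k ω) / S ω ≤ wsup / (m / 2) :=
        div_le_div₀ hwsup0 (hwsup_le _) (by positivity) hS2.le
      have h3 : wsup / (m / 2) = 2 * wsup / m := by
        field_simp
      have h4 : 0 ≤ A.indicator (fun _ => (1:ℝ)) ω :=
        Set.indicator_nonneg (fun _ _ => zero_le_one) ω
      rw [h1]
      calc w (Y k ω) / S ω ≤ 2 * wsup / m := by rw [← h3]; exact h2
        _ ≤ g ω := by simp only [hgdef]; linarith
  have hfnn : ∀ ω, 0 ≤ Finset.univ.sup' Finset.univ_nonempty (fun k => p k ω) := by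
    intro ω
    refine le_trans ?_ (Finset.le_sup' (fun k => p k ω) (Finset.mem_univ 0))
    rw [hp]
    split
    · exact le_refl _
    · exact div_nonneg (hw _) (Finset.sum_nonneg fun l _ => hw _)
  have hint : ∫ ω, Finset.univ.sup' Finset.univ_nonempty (fun k => p k ω) ∂μ ≤ ∫ ω, g ω ∂μ :=
    integral_mono_of_nonneg (ae_of_all _ hfnn) hgint (ae_of_all _ hfg)
  have hgval : ∫ ω, g ω ∂μ = (μ A).toReal + 2 * wsup / m := by
    rw [hgdef]
    rw [integral_add ((integrable_const (1:ℝ)).indicator hAmeas) (integrable_const _)]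
    rw [integral_indicator_const (1:ℝ) hAmeas, integral_const]
    simp [Measure.real]
  -- final arithmetic
  have key : (μ A).toReal + 2 * wsup / m
      ≤ 2 * wsup / (N * E0) + 4 / (N * E0 ^ 2) * (Vr0 + VrN / N) := by
    have hNpos : (0:ℝ) < N := by exact_mod_cast hN
    have h1 : 2 * wsup / m ≤ 2 * wsup / (N * E0) := by
      gcongr <;> first | positivity | linarith
    have h2 : (N * Vr0 + VrN) / (m / 2) ^ 2 ≤ (N * Vr0 + VrN) / (N * E0 / 2) ^ 2 := by
      gcongr <;> first | positivity | linarith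
    have h3 : (N * Vr0 + VrN) / (N * E0 / 2) ^ 2 = 4 / (N * E0 ^ 2) * (Vr0 + VrN / N) := by
      field_simp
      ring
    calc (μ A).toReal + 2 * wsup / m ≤ (N * Vr0 + VrN) / (m / 2) ^ 2 + 2 * wsup / (N * E0) := by
          linarith [hcheb]
      _ ≤ (N * Vr0 + VrN) / (N * E0 / 2) ^ 2 + 2 * wsup / (N * E0) := by linarith
      _ = 2 * wsup / (N * E0) + 4 / (N * E0 ^ 2) * (Vr0 + VrN / N) := by rw [h3]; ring
  calc ∫ ω, Finset.univ.sup' Finset.univ_nonempty (fun k => p k ω) ∂μ ≤ ∫ ω, g ω ∂μ := hint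
    _ = (μ A).toReal + 2 * wsup / m := hgval
    _ ≤ _ := key
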